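/- For any bounded domain Ω ⊂ ℝⁿ with positive finite measure, any 1 ≤ p < ∞, s ∈ (0,1), and any f ∈ L^p(Ω), the inequality inf_{c∈ℝ} ‖f − c‖_{L^p(Ω)}^p ≤ (diam(Ω)^{n+sp}/|Ω|) ∫_Ω ∫_Ω |f(y)−f(x)|^p / |y−x|^{n+sp} dy dx holds. -/

import Mathlib

open MeasureTheory Metric Set ENNReal

/-- Elementary fractional Poincaré inequality on an arbitrary bounded domain. -/
theorem stmt0 {n : ℕ} (hn : 1 ≤ n) (Ω : Set (EuclideanSpace ℝ (Fin n)))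
    (hΩo : IsOpen Ω) (hΩc : IsConnected Ω) (hΩb : Bornology.IsBounded Ω)
    (hvol : 0 < volume Ω) (p s : ℝ) (hp : 1 ≤ p) (hs : s ∈ Set.Ioo (0:ℝ) 1)
    (f : EuclideanSpace ℝ (Fin n) → ℝ)
    (hf : MemLp f (ENNReal.ofReal p) (volume.restrict Ω)) :
    (⨅ c : ℝ, ∫⁻ y in Ω, ENNReal.ofReal (|f y - c| ^ p)) ≤
      ENNReal.ofReal (Metric.diam Ω ^ ((n : ℝ) + s * p) / (volume Ω).toReal) *
        ∫⁻ x in Ω, ∫⁻ y in Ω,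
          ENNReal.ofReal (|f y - f x| ^ p / dist y x ^ ((n : ℝ) + s * p)) := by
  set K : ℝ := (n : ℝ) + s * p with hK
  have hKpos : 0 < K := by
    have : (0:ℝ) < s * p := mul_pos hs.1 (lt_of_lt_of_le one_pos hp)
    positivity
  have hfin : volume Ω ≠ ∞ := hΩb.measure_lt_top.ne
  have hvne : volume Ω ≠ 0 := hvol.ne'
  set D : ℝ≥0∞ := ∫⁻ x in Ω, ∫⁻ y in Ω,
      ENNReal.ofReal (|f y - f x| ^ p / dist y x ^ K) with hD
  set I : ℝ≥0∞ := ∫⁻ x in Ω, ∫⁻ y in Ω, ENNReal.ofReal (|f y - f x| ^ p) with hI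
  -- Step 1: inf ≤ (volume Ω)⁻¹ * I
  have step1 : (⨅ c : ℝ, ∫⁻ y in Ω, ENNReal.ofReal (|f y - c| ^ p)) ≤ (volume Ω)⁻¹ * I := by
    have h1 : volume Ω * (⨅ c : ℝ, ∫⁻ y in Ω, ENNReal.ofReal (|f y - c| ^ p)) ≤ I := by
      calc volume Ω * (⨅ c : ℝ, ∫⁻ y in Ω, ENNReal.ofReal (|f y - c| ^ p))
          = ∫⁻ _ in Ω, (⨅ c : ℝ, ∫⁻ y in Ω, ENNReal.ofReal (|f y - c| ^ p)) := by
            rw [lintegral_const, Measure.restrict_apply_univ, mul_comm]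
        _ ≤ I := lintegral_mono fun x => iInf_le _ (f x)
    calc (⨅ c : ℝ, ∫⁻ y in Ω, ENNReal.ofReal (|f y - c| ^ p))
        = (volume Ω)⁻¹ * (volume Ω * ⨅ c : ℝ, ∫⁻ y in Ω, ENNReal.ofReal (|f y - c| ^ p)) := by
          rw [← mul_assoc, ENNReal.inv_mul_cancel hvne hfin, one_mul]
      _ ≤ (volume Ω)⁻¹ * I := by gcongr
  -- Step 2 pointwise bound
  have ptwise : ∀ x ∈ Ω, ∀ y ∈ Ω, ENNReal.ofReal (|f y - f x| ^ p) ≤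
      ENNReal.ofReal (diam Ω ^ K) * ENNReal.ofReal (|f y - f x| ^ p / dist y x ^ K) := by
    intro x hx y hy
    rcases eq_or_ne y x with rfl | hne
    · simp only [sub_self, abs_zero]
      rw [Real.zero_rpow (by linarith : p ≠ 0)]
      simp
    · have hd : 0 < dist y x := dist_pos.mpr hne
      have hdK : 0 < dist y x ^ K := Real.rpow_pos_of_pos hd K
      have hdle : dist y x ^ K ≤ diam Ω ^ K :=
        Real.rpow_le_rpow dist_nonneg (dist_le_diam_of_mem hΩb hy hx) hKpos.le
      rw [← ENNReal.ofReal_mul (Real.rpow_nonneg diam_nonneg K)]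
      apply ENNReal.ofReal_le_ofReal
      calc |f y - f x| ^ p = |f y - f x| ^ p / dist y x ^ K * dist y x ^ K := by
            field_simp
        _ ≤ diam Ω ^ K * (|f y - f x| ^ p / dist y x ^ K) := by
            rw [mul_comm]
            gcongr
  -- Step 3: I ≤ ofReal (diam^K) * D
  have step3 : I ≤ ENNReal.ofReal (diam Ω ^ K) * D := by
    calc I ≤ ∫⁻ x in Ω, ∫⁻ y in Ω,
          ENNReal.ofReal (diam Ω ^ K) * ENNReal.ofReal (|f y - f x| ^ p / dist y x ^ K) := by
          refine lintegral_mono_ae ?_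
          filter_upwards [ae_restrict_mem hΩo.measurableSet] with x hx
          refine lintegral_mono_ae ?_
          filter_upwards [ae_restrict_mem hΩo.measurableSet] with y hy
          exact ptwise x hx y hy
      _ = ENNReal.ofReal (diam Ω ^ K) * D := by
          rw [hD, ← lintegral_const_mul' _ _ ENNReal.ofReal_ne_top]
          congr 1
          ext x
          rw [← lintegral_const_mul' _ _ ENNReal.ofReal_ne_top]
  -- Combine
  have hconst : ENNReal.ofReal (diam Ω ^ K / (volume Ω).toReal) =
      (volume Ω)⁻¹ * ENNReal.ofReal (diam Ω ^ K) := by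
    rw [ENNReal.ofReal_div_of_pos (ENNReal.toReal_pos hvne hfin),
      ENNReal.ofReal_toReal hfin, div_eq_mul_inv, mul_comm]
  calc (⨅ c : ℝ, ∫⁻ y in Ω, ENNReal.ofReal (|f y - c| ^ p))
      ≤ (volume Ω)⁻¹ * I := step1
    _ ≤ (volume Ω)⁻¹ * (ENNReal.ofReal (diam Ω ^ K) * D) := by gcongr
    _ = ENNReal.ofReal (diam Ω ^ K / (volume Ω).toReal) * D := by
        rw [hconst, mul_assoc]
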